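/- The subtree core of a tree consists of either a single vertex or two adjacent vertices. -/

import Mathlib

open SimpleGraph Finset

/-- `numSubtrees G x` is the number of subtrees (nonempty connected subgraphs, identified with
their vertex sets) of the tree `G` containing the vertex `x`. -/
noncomputable def numSubtrees {V : Type*} (G : SimpleGraph V) (x : V) : ℕ :=
  {S : Finset V | x ∈ S ∧ (G.induce (S : Set V)).Connected}.ncard

/-- The subtree core of `G`: the set of vertices contained in the maximum number of subtrees. -/
noncomputable def subtreeCore {V : Type*} (G : SimpleGraph V) : Set V :=
  {v | ∀ u, numSubtrees G u ≤ numSubtrees G v}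

section Aux

variable {V : Type*} [Fintype V] {G : SimpleGraph V}

set_option linter.unusedSectionVars false

lemma st_conn_singleton (v : V) : (G.induce (({v} : Finset V) : Set V)).Connected := by
  rw [Finset.coe_singleton, connected_iff_exists_forall_reachable]
  refine ⟨⟨v, rfl⟩, ?_⟩
  rintro ⟨w, hw⟩
  have : w = v := hw
  subst this
  rfl

lemma st_conn_insert [DecidableEq V] {S : Finset V} (hS : (G.induce (S : Set V)).Connected)
    {u v : V} (hu : u ∈ S) (hadj : G.Adj v u) :
    (G.induce ((insert v S : Finset V) : Set V)).Connected := by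
  rw [Finset.coe_insert, Set.insert_eq]
  exact connected_induce_union
    (by have := st_conn_singleton (G := G) v; rw [Finset.coe_singleton] at this; exact this.preconnected) hS.preconnected
    (Set.mem_singleton v) hu hadj

lemma st_mem_middle [DecidableEq V] (hG : G.IsAcyclic) {S : Finset V}
    (hS : (G.induce (S : Set V)).Connected)
    {u v w : V} (h1 : G.Adj u v) (h2 : G.Adj v w) (hne : u ≠ w)
    (hu : u ∈ S) (hw : w ∈ S) : v ∈ S := by
  obtain ⟨q⟩ := hS.preconnected ⟨u, hu⟩ ⟨w, hw⟩
  let q' : G.Walk u w := q.map (Embedding.induce (S : Set V)).toHom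
  have hsupp : ∀ x ∈ q'.support, x ∈ S := by
    intro x hx
    rw [show q'.support = (q.map (Embedding.induce (S : Set V)).toHom).support from rfl,
      Walk.support_map, List.mem_map] at hx
    obtain ⟨⟨y, hy⟩, -, rfl⟩ := hx
    exact hy
  have hp2 : (Walk.cons h1 (Walk.cons h2 Walk.nil)).IsPath := by
    simp [Walk.isPath_def, h1.ne, h2.ne, hne]
  have := hG.path_unique q'.toPath ⟨_, hp2⟩
  have hv : v ∈ (q'.toPath : G.Walk u w).support := by
    rw [this]; simp
  exact hsupp v (Walk.support_toPath_subset q' hv)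

lemma st_split (G : SimpleGraph V) (u v : V) :
    numSubtrees G u
      = {S : Finset V | u ∈ S ∧ v ∉ S ∧ (G.induce (S : Set V)).Connected}.ncard
        + {S : Finset V | u ∈ S ∧ v ∈ S ∧ (G.induce (S : Set V)).Connected}.ncard := by
  rw [numSubtrees, ← Set.ncard_union_eq ?_ (Set.toFinite _) (Set.toFinite _)]
  · congr 1
    ext S
    simp only [Set.mem_setOf_eq, Set.mem_union]
    tauto
  · rw [Set.disjoint_left]
    rintro S ⟨-, h, -⟩ ⟨-, h', -⟩
    exact h h'

lemma st_diff (G : SimpleGraph V) (u v : V) (h : numSubtrees G v ≤ numSubtrees G u) :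
    {S : Finset V | v ∈ S ∧ u ∉ S ∧ (G.induce (S : Set V)).Connected}.ncard
      ≤ {S : Finset V | u ∈ S ∧ v ∉ S ∧ (G.induce (S : Set V)).Connected}.ncard := by
  have e1 := st_split G u v
  have e2 := st_split G v u
  have hC : {S : Finset V | v ∈ S ∧ u ∈ S ∧ (G.induce (S : Set V)).Connected}.ncard
      = {S : Finset V | u ∈ S ∧ v ∈ S ∧ (G.induce (S : Set V)).Connected}.ncard := by
    congr 1; ext S; simp only [Set.mem_setOf_eq]; tauto
  omega

lemma st_insert_le [DecidableEq V] {v : V} {P Q : Set (Finset V)}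
    (hmaps : ∀ S ∈ P, insert v S ∈ Q) (hnot : ∀ S ∈ P, v ∉ S) : P.ncard ≤ Q.ncard := by
  apply Set.ncard_le_ncard_of_injOn (fun S => insert v S) hmaps ?_ (Set.toFinite _)
  intro S1 h1 S2 h2 he
  have h3 : (insert v S1).erase v = (insert v S2).erase v := by
    simpa using congrArg (Finset.erase · v) he
  rwa [Finset.erase_insert (hnot _ h1), Finset.erase_insert (hnot _ h2)] at h3

/-- The key local inequality: an interior vertex of a path cannot be a weak local minimum
of `numSubtrees`. -/
lemma st_triple [DecidableEq V] (hG : G.IsAcyclic) {u v w : V}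
    (h1 : G.Adj u v) (h2 : G.Adj v w) (hne : u ≠ w)
    (huv : numSubtrees G v ≤ numSubtrees G u) (hwv : numSubtrees G v ≤ numSubtrees G w) :
    False := by
  have hBA := st_diff G u v huv
  have hB'A' := st_diff G w v hwv
  -- A ≤ D : trees containing u, not v, inject into trees containing u and v, not w.
  have hAD : {S : Finset V | u ∈ S ∧ v ∉ S ∧ (G.induce (S : Set V)).Connected}.ncard
      ≤ {S : Finset V | u ∈ S ∧ v ∈ S ∧ w ∉ S ∧ (G.induce (S : Set V)).Connected}.ncard := by
    apply st_insert_le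
    · rintro S ⟨hu, hv, hc⟩
      refine ⟨Finset.mem_insert_of_mem hu, Finset.mem_insert_self v S, ?_,
        st_conn_insert hc hu h1.symm⟩
      intro hwmem
      rcases Finset.mem_insert.1 hwmem with h | h
      · exact h2.ne' h
      · exact hv (st_mem_middle hG hc h1 h2 hne hu h)
    · rintro S ⟨-, hv, -⟩; exact hv
  -- A' ≤ E : trees containing w, not v, inject into trees containing w and v, not u.
  have hA'E : {S : Finset V | w ∈ S ∧ v ∉ S ∧ (G.induce (S : Set V)).Connected}.ncard
      ≤ {S : Finset V | w ∈ S ∧ v ∈ S ∧ u ∉ S ∧ (G.induce (S : Set V)).Connected}.ncard := by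
    apply st_insert_le
    · rintro S ⟨hw, hv, hc⟩
      refine ⟨Finset.mem_insert_of_mem hw, Finset.mem_insert_self v S, ?_,
        st_conn_insert hc hw h2⟩
      intro humem
      rcases Finset.mem_insert.1 humem with h | h
      · exact h1.ne h
      · exact hv (st_mem_middle hG hc h1 h2 hne h hw)
    · rintro S ⟨-, hv, -⟩; exact hv
  -- D + 1 ≤ B' : add the singleton tree {v}.
  have hDB' : {S : Finset V | u ∈ S ∧ v ∈ S ∧ w ∉ S ∧ (G.induce (S : Set V)).Connected}.ncard + 1
      ≤ {S : Finset V | v ∈ S ∧ w ∉ S ∧ (G.induce (S : Set V)).Connected}.ncard := by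
    have hsub : insert ({v} : Finset V)
        {S : Finset V | u ∈ S ∧ v ∈ S ∧ w ∉ S ∧ (G.induce (S : Set V)).Connected}
        ⊆ {S : Finset V | v ∈ S ∧ w ∉ S ∧ (G.induce (S : Set V)).Connected} := by
      rintro S hS
      rcases Set.mem_insert_iff.1 hS with rfl | ⟨-, hv, hw, hc⟩
      · exact ⟨Finset.mem_singleton_self v,
          fun h => h2.ne' (Finset.mem_singleton.1 h), st_conn_singleton v⟩
      · exact ⟨hv, hw, hc⟩
    have hnm : ({v} : Finset V) ∉
        {S : Finset V | u ∈ S ∧ v ∈ S ∧ w ∉ S ∧ (G.induce (S : Set V)).Connected} := by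
      rintro ⟨hu, -⟩
      exact h1.ne (Finset.mem_singleton.1 hu)
    calc {S : Finset V | u ∈ S ∧ v ∈ S ∧ w ∉ S ∧ (G.induce (S : Set V)).Connected}.ncard + 1
        = (insert ({v} : Finset V)
            {S : Finset V | u ∈ S ∧ v ∈ S ∧ w ∉ S ∧ (G.induce (S : Set V)).Connected}).ncard :=
          (Set.ncard_insert_of_notMem hnm (Set.toFinite _)).symm
      _ ≤ _ := Set.ncard_le_ncard hsub (Set.toFinite _)
  -- E + 1 ≤ B.
  have hEB : {S : Finset V | w ∈ S ∧ v ∈ S ∧ u ∉ S ∧ (G.induce (S : Set V)).Connected}.ncard + 1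
      ≤ {S : Finset V | v ∈ S ∧ u ∉ S ∧ (G.induce (S : Set V)).Connected}.ncard := by
    have hsub : insert ({v} : Finset V)
        {S : Finset V | w ∈ S ∧ v ∈ S ∧ u ∉ S ∧ (G.induce (S : Set V)).Connected}
        ⊆ {S : Finset V | v ∈ S ∧ u ∉ S ∧ (G.induce (S : Set V)).Connected} := by
      rintro S hS
      rcases Set.mem_insert_iff.1 hS with rfl | ⟨-, hv, hu, hc⟩
      · exact ⟨Finset.mem_singleton_self v,
          fun h => h1.ne (Finset.mem_singleton.1 h), st_conn_singleton v⟩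
      · exact ⟨hv, hu, hc⟩
    have hnm : ({v} : Finset V) ∉
        {S : Finset V | w ∈ S ∧ v ∈ S ∧ u ∉ S ∧ (G.induce (S : Set V)).Connected} := by
      rintro ⟨hw, -⟩
      exact h2.ne' (Finset.mem_singleton.1 hw)
    calc {S : Finset V | w ∈ S ∧ v ∈ S ∧ u ∉ S ∧ (G.induce (S : Set V)).Connected}.ncard + 1
        = (insert ({v} : Finset V)
            {S : Finset V | w ∈ S ∧ v ∈ S ∧ u ∉ S ∧ (G.induce (S : Set V)).Connected}).ncard :=
          (Set.ncard_insert_of_notMem hnm (Set.toFinite _)).symm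
      _ ≤ _ := Set.ncard_le_ncard hsub (Set.toFinite _)
  omega

/-- Descent along a path: if the value strictly drops from `a` to the start of a path avoiding
`a`, then the value at the end of the path is also smaller than at `a`. -/
lemma st_descent [DecidableEq V] (hG : G.IsAcyclic) {y b : V} (p : G.Walk b y) :
    p.IsPath → ∀ {a : V}, G.Adj a b → a ∉ p.support →
      numSubtrees G b < numSubtrees G a → numSubtrees G y < numSubtrees G a := by
  induction p with
  | nil => exact fun _ _ _ _ h => h
  | @cons b c y h q ih =>
    intro hp a hab ha hba
    have hq : q.IsPath := (Walk.cons_isPath_iff h q).1 hp |>.1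
    have hbq : b ∉ q.support := (Walk.cons_isPath_iff h q).1 hp |>.2
    have hac : a ≠ c := by
      rintro rfl
      exact ha (by rw [Walk.support_cons]; exact List.mem_cons_of_mem _ q.start_mem_support)
    have hcb : numSubtrees G c < numSubtrees G b := by
      by_contra hle
      push_neg at hle
      exact st_triple hG hab h hac hba.le hle
    exact (ih hq h hbq hcb).trans hba

end Aux

/-- The subtree core of a tree consists of either a single vertex or two adjacent vertices. -/
theorem subtreeCore_single_or_two_adjacent {V : Type*} [Fintype V] (G : SimpleGraph V)
    (hT : G.IsTree) :
    (∃ v, subtreeCore G = {v}) ∨ (∃ v w, G.Adj v w ∧ subtreeCore G = {v, w}) := by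
  classical
  have hconn := hT.isConnected
  have hacyc := hT.IsAcyclic
  have : Nonempty V := hconn.nonempty
  obtain ⟨v, -, hv⟩ := Finset.exists_max_image (Finset.univ : Finset V) (numSubtrees G)
    ⟨Classical.arbitrary V, Finset.mem_univ _⟩
  have hvcore : v ∈ subtreeCore G := fun u => hv u (Finset.mem_univ u)
  -- any two distinct core vertices are adjacent
  have key : ∀ x y, x ∈ subtreeCore G → y ∈ subtreeCore G → x ≠ y → G.Adj x y := by
    intro x y hx hy hxy
    by_contra hadj
    obtain ⟨p, hp, -⟩ := hT.existsUnique_path x y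
    cases p with
    | nil => exact hxy rfl
    | @cons _ b _ h q =>
      cases q with
      | nil => exact hadj h
      | @cons _ c _ h2 q2 =>
        have hq : (Walk.cons h2 q2).IsPath := (Walk.cons_isPath_iff h _).1 hp |>.1
        have hxq : x ∉ (Walk.cons h2 q2).support := (Walk.cons_isPath_iff h _).1 hp |>.2
        have hq2 : q2.IsPath := (Walk.cons_isPath_iff h2 q2).1 hq |>.1
        have hbq2 : b ∉ q2.support := (Walk.cons_isPath_iff h2 q2).1 hq |>.2
        have hxc : x ≠ c := by
          rintro rfl
          exact hxq (by rw [Walk.support_cons]; exact List.mem_cons_of_mem _ q2.start_mem_support)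
        have hcb : numSubtrees G c < numSubtrees G b := by
          by_contra hle
          push_neg at hle
          exact st_triple hacyc h h2 hxc (hx b) hle
        have := st_descent hacyc q2 hq2 h2 hbq2 hcb
        exact absurd (hy b) (by omega)
  by_cases h2 : ∃ w ∈ subtreeCore G, w ≠ v
  · obtain ⟨w, hw, hwv⟩ := h2
    right
    refine ⟨v, w, key v w hvcore hw (Ne.symm hwv), ?_⟩
    ext u
    simp only [Set.mem_insert_iff, Set.mem_singleton_iff]
    constructor
    · intro hu
      by_contra hne
      push_neg at hne
      obtain ⟨huv, huw⟩ := hne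
      -- u, v, w pairwise adjacent: two distinct paths from v to w
      have a1 : G.Adj v w := key v w hvcore hw (Ne.symm hwv)
      have a2 : G.Adj v u := key v u hvcore hu (Ne.symm huv)
      have a3 : G.Adj u w := key u w hu hw huw
      have p1 : (Walk.cons a1 Walk.nil).IsPath := by simp [a1.ne]
      have p2 : (Walk.cons a2 (Walk.cons a3 Walk.nil)).IsPath := by
        simp [Walk.isPath_def, a2.ne, a3.ne, a1.ne]
      have := hacyc.path_unique ⟨_, p1⟩ ⟨_, p2⟩
      have hlen := congrArg (fun p : G.Path v w => (p : G.Walk v w).length) this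
      simp at hlen
    · rintro (rfl | rfl)
      · exact hvcore
      · exact hw
  · left
    push_neg at h2
    refine ⟨v, ?_⟩
    ext u
    simp only [Set.mem_singleton_iff]
    exact ⟨fun hu => h2 u hu, fun h => h ▸ hvcore⟩
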